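/- Let (C_i)_{i≥1} be the cycles of the stack-based cycle decomposition of an infinite walk, and suppose the stack height attains a minimum value h infinitely often after some index i_h. Then for any two cycles C and C' emitted after step i_h, there exists a finite sequence of cycles C = C_1, ..., C_n, ..., C_{n+m} = C' from the decomposition such that consecutive cycles in the sequence share at least one common vertex of the walk (specifically each consecutive pair visits a common position of the walk). -/

import Mathlib

/-- The stack of walk positions in the stack-based cycle decomposition: push each
position; when the vertex at the pushed position already occurs at some position on
the stack, pop the simple cycle thus formed and push the position back. -/
def posStack {V : Type*} [DecidableEq V] (v : ℕ → V) : ℕ → List ℕ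
  | 0 => [0]
  | n + 1 =>
    let st := posStack v n
    if (st.dropWhile (fun j => decide (v j ≠ v (n + 1)))) = [] then
      (n + 1) :: st
    else
      (n + 1) :: (st.dropWhile (fun j => decide (v j ≠ v (n + 1)))).tail

/-- A simple cycle is emitted at step `n + 1` when the newly visited vertex already
occurs on the stack. -/
def emits {V : Type*} [DecidableEq V] (v : ℕ → V) (n : ℕ) : Prop :=
  ∃ j ∈ posStack v n, v j = v (n + 1)

/-- The start position of the cycle emitted at step `n + 1`. -/
def startIdx {V : Type*} [DecidableEq V] (v : ℕ → V) (n : ℕ) : ℕ :=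
  ((posStack v n).dropWhile (fun j => decide (v j ≠ v (n + 1)))).headD 0

open List Relation

section
variable {V : Type*} [DecidableEq V] (v : ℕ → V)

lemma posStack_head : ∀ t, ∃ l, posStack v t = t :: l := by
  intro t
  cases t with
  | zero => exact ⟨[], rfl⟩
  | succ n =>
    simp only [posStack]
    split
    · exact ⟨_, rfl⟩
    · exact ⟨_, rfl⟩

lemma mem_posStack_le : ∀ t, ∀ j ∈ posStack v t, j ≤ t := by
  intro t
  induction t with
  | zero => intro j hj; simp [posStack] at hj; omega
  | succ n ihn =>
    intro j hj
    simp only [posStack] at hj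
    split at hj
    · rcases List.mem_cons.mp hj with h | h
      · omega
      · exact le_trans (ihn j h) (Nat.le_succ n)
    · rcases List.mem_cons.mp hj with h | h
      · omega
      · have : j ∈ posStack v n := by
          have h1 : ((posStack v n).dropWhile (fun j => decide (v j ≠ v (n + 1)))).tail <:+ posStack v n :=
            (List.tail_suffix _).trans (List.dropWhile_suffix _)
          exact h1.subset h
        exact le_trans (ihn j this) (Nat.le_succ n)

lemma posStack_sorted : ∀ t, (posStack v t).Pairwise (· > ·) := by
  intro t
  induction t with
  | zero => simp [posStack]
  | succ n ihn =>
    simp only [posStack]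
    split
    · refine List.pairwise_cons.mpr ⟨?_, ihn⟩
      intro b hb
      exact lt_of_le_of_lt (mem_posStack_le v n b hb) (Nat.lt_succ_self n)
    · refine List.pairwise_cons.mpr ⟨?_, ?_⟩
      · intro b hb
        have : b ∈ posStack v n :=
          ((List.tail_suffix _).trans (List.dropWhile_suffix _)).subset hb
        exact lt_of_le_of_lt (mem_posStack_le v n b this) (Nat.lt_succ_self n)
      · exact ihn.sublist ((List.tail_suffix _).trans (List.dropWhile_suffix _)).sublist

lemma emits_iff_drop (t : ℕ) :
    emits v t ↔ (posStack v t).dropWhile (fun j => decide (v j ≠ v (t + 1))) ≠ [] := by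
  rw [Ne, List.dropWhile_eq_nil_iff]
  constructor
  · rintro ⟨j, hj, hv⟩ hall
    have := hall j hj
    simp at this
    exact this hv
  · intro hn
    push_neg at hn
    obtain ⟨j, hj, hv⟩ := hn
    simp at hv
    exact ⟨j, hj, hv⟩

lemma posStack_succ_of_emits {t : ℕ} (h : emits v t) :
    posStack v (t + 1) =
      (t + 1) :: ((posStack v t).dropWhile (fun j => decide (v j ≠ v (t + 1)))).tail := by
  simp only [posStack]
  rw [if_neg ((emits_iff_drop v t).mp h)]

lemma startIdx_mem {t : ℕ} (h : emits v t) : startIdx v t ∈ posStack v t := by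
  have hd := (emits_iff_drop v t).mp h
  unfold startIdx
  have : ((posStack v t).dropWhile (fun j => decide (v j ≠ v (t + 1)))).headD 0 ∈
      (posStack v t).dropWhile (fun j => decide (v j ≠ v (t + 1))) := by
    cases hq : (posStack v t).dropWhile (fun j => decide (v j ≠ v (t + 1))) with
    | nil => exact absurd hq hd
    | cons a l => simp
  exact (List.dropWhile_suffix _).subset this

lemma startIdx_le {t : ℕ} (h : emits v t) : startIdx v t ≤ t :=
  mem_posStack_le v t _ (startIdx_mem v h)

lemma pop_lemma {t j : ℕ} (hj : j ∈ posStack v t) (hj' : j ∉ posStack v (t + 1)) :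
    emits v t ∧ startIdx v t ≤ j := by
  set p := (fun j => decide (v j ≠ v (t + 1))) with hp
  by_cases hd : (posStack v t).dropWhile p = []
  · exfalso
    apply hj'
    simp only [posStack]
    rw [if_pos hd]
    exact List.mem_cons_of_mem _ hj
  have hem : emits v t := (emits_iff_drop v t).mpr hd
  refine ⟨hem, ?_⟩
  obtain ⟨a, l, hq⟩ : ∃ a l, (posStack v t).dropWhile p = a :: l := by
    cases hq : (posStack v t).dropWhile p with
    | nil => exact absurd hq hd
    | cons a l => exact ⟨a, l, rfl⟩
  have hstart : startIdx v t = a := by unfold startIdx; rw [← hp, hq]; rfl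
  have hsucc : posStack v (t + 1) = (t + 1) :: l := by
    rw [posStack_succ_of_emits v hem, ← hp, hq]; rfl
  have hsplit : (posStack v t).takeWhile p ++ a :: l = posStack v t := by
    rw [← hq]; exact List.takeWhile_append_dropWhile
  have hjsplit : j ∈ (posStack v t).takeWhile p ++ a :: l := by rw [hsplit]; exact hj
  rcases List.mem_append.mp hjsplit with hjt | hjd
  · -- j in takeWhile part: j > a by sortedness
    have hs := posStack_sorted v t
    rw [← hsplit] at hs
    have := (List.pairwise_append.mp hs).2.2 j hjt a (List.mem_cons_self)
    omega
  · rcases List.mem_cons.mp hjd with h | h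
    · rw [hstart, h]
    · exfalso; exact hj' (by rw [hsucc]; exact List.mem_cons_of_mem _ h)

/-- Overlap relation between emitted cycles. -/
def ovl (a b : ℕ) : Prop :=
  emits v a ∧ emits v b ∧
    (Set.Icc (startIdx v a) (a + 1) ∩ Set.Icc (startIdx v b) (b + 1)).Nonempty

lemma ovl_symm : Symmetric (ovl v) := by
  rintro a b ⟨ha, hb, x, hx⟩
  exact ⟨hb, ha, x, Set.inter_comm _ _ ▸ hx⟩

lemma track : ∀ (d t a : ℕ), emits v a → a + 1 ∈ posStack v t →
    ∃ b, a ≤ b ∧ emits v b ∧ ReflTransGen (ovl v) a b ∧ b + 1 ∈ posStack v (t + d) := by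
  intro d
  induction d with
  | zero => intro t a ha hmem; exact ⟨a, le_refl a, ha, ReflTransGen.refl, hmem⟩
  | succ d ihd =>
    intro t a ha hmem
    obtain ⟨b, hab, hb, hchain, hbmem⟩ := ihd t a ha hmem
    by_cases hnext : b + 1 ∈ posStack v (t + d + 1)
    · exact ⟨b, hab, hb, hchain, by rwa [show t + (d+1) = t + d + 1 by omega]⟩
    · obtain ⟨hem, hle⟩ := pop_lemma v hbmem hnext
      have hble : b + 1 ≤ t + d := mem_posStack_le v _ _ hbmem
      refine ⟨t + d, by omega, hem, hchain.tail ?_, ?_⟩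
      · refine ⟨hb, hem, b + 1, ?_⟩
        constructor
        · exact Set.mem_Icc.mpr ⟨by have := startIdx_le v hb; omega, le_refl _⟩
        · exact Set.mem_Icc.mpr ⟨hle, by omega⟩
      · obtain ⟨l, hl⟩ := posStack_head v (t + d + 1)
        rw [show t + (d+1) = t + d + 1 by omega, hl]
        exact List.mem_cons_self

lemma chain_of_rtg : ∀ {x y : ℕ}, ReflTransGen (ovl v) x y → emits v x →
    ∃ (p : ℕ) (f : ℕ → ℕ), f 0 = x ∧ f p = y ∧ (∀ i ≤ p, emits v (f i)) ∧
      (∀ i < p,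
        (Set.Icc (startIdx v (f i)) (f i + 1) ∩
          Set.Icc (startIdx v (f (i + 1))) (f (i + 1) + 1)).Nonempty) := by
  intro x y hxy hx
  induction hxy with
  | refl => exact ⟨0, fun _ => x, rfl, rfl, fun i _ => hx, fun i hi => absurd hi (by omega)⟩
  | @tail b c hab hbc ihe =>
    obtain ⟨p, f, h0, hp, he, hov⟩ := ihe
    refine ⟨p + 1, fun i => if i ≤ p then f i else c, by simp [h0], by simp, ?_, ?_⟩
    · intro i hi
      by_cases hip : i ≤ p
      · simpa [hip] using he i hip
      · simpa [hip] using hbc.2.1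
    · intro i hi
      by_cases hip : i < p
      · have h1 : i ≤ p := by omega
        have h2 : i + 1 ≤ p := by omega
        simpa [h1, h2] using hov i hip
      · have hieq : i = p := by omega
        subst hieq
        have h1 : ¬ (i + 1 ≤ i) := by omega
        simp only [le_refl, if_pos, h1, if_neg]
        rw [hp]
        exact hbc.2.2

lemma posStack_inv : ∀ t e s, (e :: s) <:+ posStack v t →
    (posStack v e).length = s.length + 1 := by
  intro t
  induction t with
  | zero =>
    intro e s hsuf
    rw [show posStack v 0 = [0] from rfl] at hsuf
    rcases List.suffix_cons_iff.mp hsuf with h3 | h3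
    · obtain ⟨he, hs⟩ : e = 0 ∧ s = [] := by simpa using h3
      subst he; subst hs; rfl
    · simpa using h3.length_le
  | succ n ihn =>
    intro e s hsuf
    by_cases hd : (posStack v n).dropWhile (fun j => decide (v j ≠ v (n + 1))) = []
    · have hrw : posStack v (n + 1) = (n + 1) :: posStack v n := by
        simp only [posStack]; rw [if_pos hd]
      rw [hrw] at hsuf
      rcases List.suffix_cons_iff.mp hsuf with h3 | h3
      · obtain ⟨he, hs⟩ : e = n + 1 ∧ s = posStack v n := by simpa using h3
        subst he; subst hs
        rw [hrw]; simp
      · exact ihn e s h3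
    · have hem : emits v n := (emits_iff_drop v n).mpr hd
      have hrw := posStack_succ_of_emits v hem
      rw [hrw] at hsuf
      rcases List.suffix_cons_iff.mp hsuf with h3 | h3
      · obtain ⟨he, hs⟩ :
            e = n + 1 ∧
              s = ((posStack v n).dropWhile (fun j => decide (v j ≠ v (n + 1)))).tail := by
          simpa using h3
        subst he; subst hs
        rw [hrw]; simp
      · exact ihn e s (h3.trans ((List.tail_suffix _).trans (List.dropWhile_suffix _)))

lemma reach_bottom {h ih : ℕ}
    (hmin : ∀ n ≥ ih, h ≤ (posStack v n).length)
    {m : ℕ} (hmih : ih ≤ m) (hlen : (posStack v (m + 1)).length = h)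
    {a : ℕ} (ha : ih < a) (hea : emits v a) (ham : a + 1 ≤ m) :
    ReflTransGen (ovl v) a m := by
  have hmem : a + 1 ∈ posStack v (a + 1) := by
    obtain ⟨l, hl⟩ := posStack_head v (a + 1)
    rw [hl]; exact List.mem_cons_self
  obtain ⟨b, hab, heb, hchain, hbmem⟩ := track v (m - a) (a + 1) a hea hmem
  rw [show a + 1 + (m - a) = m + 1 by omega] at hbmem
  -- show b = m
  obtain ⟨l, hl⟩ := posStack_head v (m + 1)
  have hge1 : 1 ≤ h := by rw [hl] at hlen; simp at hlen; omega
  have hb : b = m := by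
    by_contra hbm
    have hbl : b + 1 ∈ l := by
      rw [hl] at hbmem
      rcases List.mem_cons.mp hbmem with h1 | h1
      · omega
      · exact h1
    obtain ⟨l1, l2, hsplit⟩ := List.append_of_mem hbl
    have hsuf : (b + 1) :: l2 <:+ posStack v (m + 1) := by
      refine List.IsSuffix.trans ⟨l1, hsplit.symm⟩ ?_
      rw [hl]; exact List.suffix_cons _ _
    have hinv := posStack_inv v (m + 1) (b + 1) l2 hsuf
    have hlb : l.length + 1 = h := by rw [hl] at hlen; simpa using hlen
    have hl2 : l2.length + 1 ≤ l.length := by rw [hsplit]; simp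
    have hmin' := hmin (b + 1) (by omega)
    omega
  rw [hb] at hchain
  exact hchain

end

/-- If after index `i_h` the stack height of the cycle decomposition is always at
least `h` and equals `h` infinitely often, then any two cycles emitted after `i_h`
are connected by a finite sequence of emitted cycles in which consecutive cycles
visit a common position of the walk. -/
theorem stmt13 {V : Type*} [Fintype V] [DecidableEq V] (v : ℕ → V)
    (h ih : ℕ)
    (hmin : ∀ n ≥ ih, h ≤ (posStack v n).length)
    (hinf : {n : ℕ | ih ≤ n ∧ (posStack v n).length = h}.Infinite) :
    ∀ n n' : ℕ, ih < n → ih < n' → emits v n → emits v n' →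
      ∃ (p : ℕ) (m : ℕ → ℕ), m 0 = n ∧ m p = n' ∧
        (∀ i ≤ p, emits v (m i)) ∧
        (∀ i < p,
          (Set.Icc (startIdx v (m i)) (m i + 1) ∩
            Set.Icc (startIdx v (m (i + 1))) (m (i + 1) + 1)).Nonempty) := by
  intro n n' hn hn' hen hen'
  obtain ⟨T2, hT2mem, hT2gt⟩ := hinf.exists_gt (ih + n + n' + 2)
  obtain ⟨hT2ih, hT2len⟩ := hT2mem
  set m := T2 - 1 with hmdef
  have hm1 : m + 1 = T2 := by omega
  have hmih : ih ≤ m := by omega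
  have hlen : (posStack v (m + 1)).length = h := by rw [hm1]; exact hT2len
  have hemm : emits v m := by
    by_contra hne
    have hd : (posStack v m).dropWhile (fun j => decide (v j ≠ v (m + 1))) = [] := by
      by_contra hdd; exact hne ((emits_iff_drop v m).mpr hdd)
    have hrw : posStack v (m + 1) = (m + 1) :: posStack v m := by
      simp only [posStack]; rw [if_pos hd]
    have h1 := hmin m hmih
    rw [hrw] at hlen
    simp at hlen
    omega
  have hc1 : ReflTransGen (ovl v) n m :=
    reach_bottom v hmin hmih hlen hn hen (by omega)
  have hc2 : ReflTransGen (ovl v) n' m :=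
    reach_bottom v hmin hmih hlen hn' hen' (by omega)
  have hc : ReflTransGen (ovl v) n n' :=
    hc1.trans (by haveI : Std.Symm (ovl v) := ⟨ovl_symm v⟩; exact Std.Symm.symm _ _ hc2)
  exact chain_of_rtg v hc hen
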